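/- Let θ : ℝᵐ → ℝ₊ be convex with θ(x) ≥ a‖x‖ + b for some a > 0, b ∈ ℝ. For φ : ℝᵐ → ℝ continuous, bounded below, with |φ(x)| ≤ A + B‖x‖, define Q̄_θφ(x) = inf over probability measures p on ℝᵐ with finite first moment of ( ∫ φ dp + θ(x − ∫ y dp(y)) ). Then Q̄_θφ(x) = inf_{z ∈ ℝᵐ} ( φ̄(z) + θ(x − z) ), where φ̄ is the greatest convex function on ℝᵐ below φ. -/
import Mathlib

open MeasureTheory

section Stmt15Aux

variable {E : Type*} [NormedAddCommGroup E] [NormedSpace ℝ E]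
  [FiniteDimensional ℝ E] [MeasurableSpace E] [BorelSpace E]

/-- The set of values `∫ φ dp` over probability measures with barycenter `z`. -/
def stmt15S (φ : E → ℝ) (z : E) : Set ℝ :=
  {r | ∃ p : Measure E, IsProbabilityMeasure p ∧ Integrable (fun y => y) p ∧
    Integrable φ p ∧ (∫ y, y ∂p) = z ∧ r = ∫ y, φ y ∂p}

lemma stmt15_dirac_mem (φ : E → ℝ) (z : E) : φ z ∈ stmt15S φ z := by
  have hae : (fun _ : E => φ z) =ᵐ[Measure.dirac z] φ := by
    rw [Filter.EventuallyEq, ae_dirac_eq]; exact Filter.eventually_pure.2 rfl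
  have haey : (fun _ : E => z) =ᵐ[Measure.dirac z] (fun y => y) := by
    rw [Filter.EventuallyEq, ae_dirac_eq]; exact Filter.eventually_pure.2 rfl
  refine ⟨Measure.dirac z, inferInstance, (integrable_const z).congr haey,
    (integrable_const (φ z)).congr hae, ?_, ?_⟩
  · rw [integral_dirac]
  · rw [integral_dirac]

lemma stmt15_bddBelow (φ : E → ℝ) {c : ℝ} (hc : ∀ y, c ≤ φ y) (z : E) :
    c ∈ lowerBounds (stmt15S φ z) := by
  rintro r ⟨p, hp, hpy, hpφ, hz, rfl⟩
  calc c = ∫ _, c ∂p := by simp [measure_univ]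
    _ ≤ ∫ y, φ y ∂p := integral_mono (integrable_const c) hpφ hc

lemma stmt15_comb_mem (φ : E → ℝ) {z₁ z₂ : E} {r₁ r₂ t₁ t₂ : ℝ}
    (h₁ : r₁ ∈ stmt15S φ z₁) (h₂ : r₂ ∈ stmt15S φ z₂)
    (ht₁ : 0 ≤ t₁) (ht₂ : 0 ≤ t₂) (ht : t₁ + t₂ = 1) :
    t₁ * r₁ + t₂ * r₂ ∈ stmt15S φ (t₁ • z₁ + t₂ • z₂) := by
  obtain ⟨p₁, hp₁, hpy₁, hpφ₁, hz₁, rfl⟩ := h₁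
  obtain ⟨p₂, hp₂, hpy₂, hpφ₂, hz₂, rfl⟩ := h₂
  refine ⟨ENNReal.ofReal t₁ • p₁ + ENNReal.ofReal t₂ • p₂, ?_, ?_, ?_, ?_, ?_⟩
  · constructor
    simp [Measure.add_apply, Measure.smul_apply, measure_univ, smul_eq_mul,
      ← ENNReal.ofReal_add ht₁ ht₂, ht]
  · exact (hpy₁.smul_measure ENNReal.ofReal_ne_top).add_measure
      (hpy₂.smul_measure ENNReal.ofReal_ne_top)
  · exact (hpφ₁.smul_measure ENNReal.ofReal_ne_top).add_measure
      (hpφ₂.smul_measure ENNReal.ofReal_ne_top)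
  · rw [integral_add_measure (hpy₁.smul_measure ENNReal.ofReal_ne_top)
      (hpy₂.smul_measure ENNReal.ofReal_ne_top), integral_smul_measure,
      integral_smul_measure, ENNReal.toReal_ofReal ht₁, ENNReal.toReal_ofReal ht₂,
      hz₁, hz₂]
  · rw [integral_add_measure (hpφ₁.smul_measure ENNReal.ofReal_ne_top)
      (hpφ₂.smul_measure ENNReal.ofReal_ne_top), integral_smul_measure,
      integral_smul_measure, ENNReal.toReal_ofReal ht₁, ENNReal.toReal_ofReal ht₂]
    simp [smul_eq_mul]

/-- The function `z ↦ sInf (stmt15S φ z)` is convex. -/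
lemma stmt15_g_convex (φ : E → ℝ) {c : ℝ} (hc : ∀ y, c ≤ φ y) :
    ConvexOn ℝ Set.univ (fun z => sInf (stmt15S φ z)) := by
  refine ⟨convex_univ, fun z₁ _ z₂ _ t₁ t₂ ht₁ ht₂ ht => ?_⟩
  have hne₁ : (stmt15S φ z₁).Nonempty := ⟨φ z₁, stmt15_dirac_mem φ z₁⟩
  have hne₂ : (stmt15S φ z₂).Nonempty := ⟨φ z₂, stmt15_dirac_mem φ z₂⟩
  have hbb₁ : BddBelow (stmt15S φ z₁) := ⟨c, stmt15_bddBelow φ hc z₁⟩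
  have hbb₂ : BddBelow (stmt15S φ z₂) := ⟨c, stmt15_bddBelow φ hc z₂⟩
  refine le_of_forall_pos_le_add fun ε hε => ?_
  have h1 : sInf (stmt15S φ z₁) < sInf (stmt15S φ z₁) + ε / 2 := by linarith
  have h2 : sInf (stmt15S φ z₂) < sInf (stmt15S φ z₂) + ε / 2 := by linarith
  obtain ⟨r₁, hr₁, hr₁'⟩ := exists_lt_of_csInf_lt hne₁ h1
  obtain ⟨r₂, hr₂, hr₂'⟩ := exists_lt_of_csInf_lt hne₂ h2
  have hmem := stmt15_comb_mem φ hr₁ hr₂ ht₁ ht₂ ht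
  have hle : sInf (stmt15S φ (t₁ • z₁ + t₂ • z₂)) ≤ t₁ * r₁ + t₂ * r₂ :=
    csInf_le ⟨c, stmt15_bddBelow φ hc _⟩ hmem
  have : t₁ * r₁ + t₂ * r₂ ≤
      t₁ * (sInf (stmt15S φ z₁) + ε / 2) + t₂ * (sInf (stmt15S φ z₂) + ε / 2) :=
    add_le_add (mul_le_mul_of_nonneg_left hr₁'.le ht₁) (mul_le_mul_of_nonneg_left hr₂'.le ht₂)
  have hε2 : t₁ * (ε / 2) + t₂ * (ε / 2) = ε / 2 := by
    rw [← add_mul, ht, one_mul]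
  simp only [smul_eq_mul] at hle ⊢
  nlinarith [hle, this]

end Stmt15Aux

/-- With `θ : ℝᵐ → ℝ₊` convex and `θ(x) ≥ a‖x‖ + b` (`a > 0`),
and `φ : ℝᵐ → ℝ` continuous, bounded below, of linear growth, one has
`Q̄_θφ(x) = inf_p (∫ φ dp + θ(x − ∫ y dp)) = inf_z (φ̄(z) + θ(x − z))`, where
the first infimum is over probability measures with finite first moment, and
`φ̄` is the greatest convex function below `φ`. -/
theorem stmt_15 {E : Type*} [NormedAddCommGroup E] [NormedSpace ℝ E]
    [FiniteDimensional ℝ E] [MeasurableSpace E] [BorelSpace E]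
    (θ : E → ℝ) (hθnonneg : ∀ x, 0 ≤ θ x) (hθconv : ConvexOn ℝ Set.univ θ)
    (a : ℝ) (ha : 0 < a) (b : ℝ) (hθgrowth : ∀ x, a * ‖x‖ + b ≤ θ x)
    (φ : E → ℝ) (hφcont : Continuous φ) (hφbdd : BddBelow (Set.range φ))
    (A B : ℝ) (hφgrowth : ∀ x, |φ x| ≤ A + B * ‖x‖)
    (φbar : E → ℝ) (hbarconv : ConvexOn ℝ Set.univ φbar)
    (hbarle : ∀ x, φbar x ≤ φ x)
    (hbargreatest : ∀ h : E → ℝ, ConvexOn ℝ Set.univ h →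
      (∀ x, h x ≤ φ x) → ∀ x, h x ≤ φbar x)
    (x : E) :
    sInf {r : ℝ | ∃ p : Measure E, IsProbabilityMeasure p ∧
        Integrable (fun y => y) p ∧ Integrable φ p ∧
        r = ∫ y, φ y ∂p + θ (x - ∫ y, y ∂p)} =
      ⨅ z : E, (φbar z + θ (x - z)) := by
  obtain ⟨c, hc⟩ := hφbdd
  have hcφ : ∀ y, c ≤ φ y := fun y => hc ⟨y, rfl⟩
  have hcbar : ∀ y, c ≤ φbar y :=
    hbargreatest (fun _ => c) (convexOn_const c convex_univ) hcφ
  set T : Set ℝ := {r : ℝ | ∃ p : Measure E, IsProbabilityMeasure p ∧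
      Integrable (fun y => y) p ∧ Integrable φ p ∧
      r = ∫ y, φ y ∂p + θ (x - ∫ y, y ∂p)} with hT
  have hTne : T.Nonempty := by
    obtain ⟨p, hp, hpy, hpφ, hz, hr⟩ := stmt15_dirac_mem φ x
    exact ⟨φ x + θ (x - x), p, hp, hpy, hpφ, by rw [hz, ← hr]⟩
  have hTbb : c ∈ lowerBounds T := by
    rintro r ⟨p, hp, hpy, hpφ, rfl⟩
    have h1 : c ≤ ∫ y, φ y ∂p := by
      calc c = ∫ _, c ∂p := by simp [measure_univ]
        _ ≤ ∫ y, φ y ∂p := integral_mono (integrable_const c) hpφ hcφ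
    linarith [hθnonneg (x - ∫ y, y ∂p)]
  have hIbb : BddBelow (Set.range fun z : E => φbar z + θ (x - z)) := by
    refine ⟨c, ?_⟩
    rintro r ⟨z, rfl⟩
    show c ≤ φbar z + θ (x - z)
    linarith [hcbar z, hθnonneg (x - z)]
  -- continuity of φbar
  have hbarcont : Continuous φbar := by
    exact continuousOn_univ.mp (hbarconv.continuousOn isOpen_univ)
  refine le_antisymm ?_ ?_
  · -- sInf T ≤ ⨅ z
    refine le_ciInf fun z => ?_
    refine le_of_forall_pos_le_add fun ε hε => ?_
    -- the envelope-via-measures function g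
    have hgconv := stmt15_g_convex φ hcφ
    have hgle : ∀ y, sInf (stmt15S φ y) ≤ φ y := fun y =>
      csInf_le ⟨c, stmt15_bddBelow φ hcφ y⟩ (stmt15_dirac_mem φ y)
    have hgbar : sInf (stmt15S φ z) ≤ φbar z := hbargreatest _ hgconv hgle z
    have : sInf (stmt15S φ z) < φbar z + ε := by linarith
    obtain ⟨r, hr, hrlt⟩ :=
      exists_lt_of_csInf_lt ⟨φ z, stmt15_dirac_mem φ z⟩ this
    obtain ⟨p, hp, hpy, hpφ, hz, rfl⟩ := hr
    have hmem : (∫ y, φ y ∂p) + θ (x - z) ∈ T := ⟨p, hp, hpy, hpφ, by rw [hz]⟩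
    calc sInf T ≤ (∫ y, φ y ∂p) + θ (x - z) := csInf_le ⟨c, hTbb⟩ hmem
      _ ≤ φbar z + θ (x - z) + ε := by linarith
  · -- ⨅ z ≤ sInf T : Jensen
    refine le_csInf hTne ?_
    rintro r ⟨p, hp, hpy, hpφ, rfl⟩
    have hbari : Integrable φbar p := by
      refine Integrable.mono ((integrable_const (|c| + |A|)).add (hpy.norm.const_mul |B|))
        (hbarcont.aestronglyMeasurable) ?_
      filter_upwards with y
      have h1 : φbar y ≤ |A| + |B| * ‖y‖ := by
        have := hφgrowth y
        have hb : B * ‖y‖ ≤ |B| * ‖y‖ :=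
          mul_le_mul_of_nonneg_right (le_abs_self B) (norm_nonneg y)
        have := (hbarle y).trans ((le_abs_self _).trans (hφgrowth y))
        calc φbar y ≤ A + B * ‖y‖ := this
          _ ≤ |A| + |B| * ‖y‖ := by gcongr; exact le_abs_self A
      have h2 : -(|c| + (|A| + |B| * ‖y‖)) ≤ φbar y := by
        have := hcbar y
        have h3 : -|c| ≤ c := neg_abs_le c
        have h4 : 0 ≤ |A| + |B| * ‖y‖ := by positivity
        linarith
      rw [Real.norm_eq_abs, Real.norm_eq_abs, abs_le]
      constructor
      · calc -(|(|c| + |A|) + |B| * ‖y‖|) ≤ -((|c| + |A|) + |B| * ‖y‖) := by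
              rw [neg_le_neg_iff]; exact le_abs_self _
          _ ≤ φbar y := by linarith
      · calc φbar y ≤ |A| + |B| * ‖y‖ := h1
          _ ≤ (|c| + |A|) + |B| * ‖y‖ := by linarith [abs_nonneg c]
          _ ≤ |(|c| + |A|) + |B| * ‖y‖| := le_abs_self _
    have hjensen : φbar (∫ y, y ∂p) ≤ ∫ y, φbar y ∂p := by
      have := hbarconv.map_integral_le (hbarcont.continuousOn) isClosed_univ
        (Filter.Eventually.of_forall fun y => Set.mem_univ (id y))
        hpy (by simpa [Function.comp] using hbari)
      simpa using this
    have hmono : ∫ y, φbar y ∂p ≤ ∫ y, φ y ∂p :=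
      integral_mono hbari hpφ hbarle
    calc (⨅ z : E, (φbar z + θ (x - z))) ≤ φbar (∫ y, y ∂p) + θ (x - ∫ y, y ∂p) :=
          ciInf_le hIbb _
      _ ≤ (∫ y, φ y ∂p) + θ (x - ∫ y, y ∂p) := by linarith
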